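/- Let k be a field of characteristic ≠ 2 and ℓ/k a quadratic field extension with nontrivial k-automorphism σ. Then: (i) for c₃ ∈ k, the triple (1, 0, c₃) is ℓ-admissible if and only if c₃ ≠ 0 and c₃ ≠ x·σ(x) for every nonzero x ∈ ℓ; (ii) for c₂ ∈ k, the triple (0, c₂, 0) is ℓ-admissible if and only if c₂ ≠ 0 and c₂ is not the square of any element of ℓ. -/
import Mathlib


open Module Function

variable {k ℓ : Type}

/-- The function `q_c : ℓ × ℓ → ℓ` associated with a triple `c = (c₁, c₂, c₃) ∈ k³`. -/
def qc [Field k] [Field ℓ] [Algebra k ℓ] (σ : ℓ ≃ₐ[k] ℓ) (c : k × k × k) (x y : ℓ) : ℓ :=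
  (1 - algebraMap k ℓ c.1) * x ^ 2 + algebraMap k ℓ c.1 * (x * σ x)
    - algebraMap k ℓ c.2.1 * y ^ 2 - algebraMap k ℓ c.2.2 * (y * σ y)

/-- A triple `c ∈ k³` is `ℓ`-admissible if `q_c` is anisotropic. -/
def IsAdmissibleTriple [Field k] [Field ℓ] [Algebra k ℓ] (σ : ℓ ≃ₐ[k] ℓ)
    (c : k × k × k) : Prop :=
  ∀ x y : ℓ, qc σ c x y = 0 → x = 0 ∧ y = 0

/-- Let `k` be a field of characteristic ≠ 2 and `ℓ/k` a quadratic field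
extension with nontrivial `k`-automorphism `σ`. Then:
(i) for `c₃ ∈ k`, the triple `(1, 0, c₃)` is `ℓ`-admissible iff `c₃ ≠ 0` and `c₃` is not a
norm `x·σ(x)` of any nonzero `x ∈ ℓ`;
(ii) for `c₂ ∈ k`, the triple `(0, c₂, 0)` is `ℓ`-admissible iff `c₂ ≠ 0` and `c₂` is not a
square in `ℓ`. -/
theorem admissible_S_and_K [Field k] [Field ℓ] [Algebra k ℓ]
    (hchar : (2 : k) ≠ 0) (hquad : finrank k ℓ = 2)
    (σ : ℓ ≃ₐ[k] ℓ) (hσ : ∃ x : ℓ, σ x ≠ x) :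
    (∀ c₃ : k, IsAdmissibleTriple σ ((1 : k), (0 : k), c₃) ↔
      (c₃ ≠ 0 ∧ ∀ x : ℓ, x ≠ 0 → algebraMap k ℓ c₃ ≠ x * σ x)) ∧
    (∀ c₂ : k, IsAdmissibleTriple σ ((0 : k), c₂, (0 : k)) ↔
      (c₂ ≠ 0 ∧ ∀ x : ℓ, x ^ 2 ≠ algebraMap k ℓ c₂)) := by
  have hinj : Function.Injective (algebraMap k ℓ) := (algebraMap k ℓ).injective
  constructor
  · intro c₃
    have hq : ∀ x y : ℓ, qc σ (1, 0, c₃) x y = x * σ x - algebraMap k ℓ c₃ * (y * σ y) := by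
      intro x y; simp [qc]; try ring
    constructor
    · intro h
      constructor
      · intro hc
        have := (h 0 1 (by rw [hq]; simp [hc])).2
        exact one_ne_zero this
      · intro x hx hc
        exact hx (h x 1 (by rw [hq]; simp [hc])).1
    · rintro ⟨hc, hn⟩ x y hxy
      rw [hq] at hxy
      have key : x * σ x = algebraMap k ℓ c₃ * (y * σ y) := by linear_combination hxy
      by_cases hy : y = 0
      · subst hy
        simp only [map_zero, mul_zero, zero_mul] at key
        rcases mul_eq_zero.mp key with h | h
        · exact ⟨h, rfl⟩
        · exact ⟨by simpa using σ.symm.toRingHom.congr_arg h, rfl⟩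
      · exfalso
        have hx : x ≠ 0 := by
          rintro rfl
          simp only [zero_mul, map_zero, mul_zero] at key
          rcases mul_eq_zero.mp key.symm with h | h
          · exact hc (hinj (by simpa using h))
          · rcases mul_eq_zero.mp h with h | h
            · exact hy h
            · exact hy (by simpa using σ.symm.toRingHom.congr_arg h)
        refine hn (x / y) (div_ne_zero hx hy) ?_
        have hσy : σ y ≠ 0 := fun h => hy (by simpa using σ.symm.toRingHom.congr_arg h)
        rw [map_div₀, div_mul_div_comm, eq_div_iff (mul_ne_zero hy hσy), key]
        try ring
  · intro c₂
    have hq : ∀ x y : ℓ, qc σ (0, c₂, 0) x y = x ^ 2 - algebraMap k ℓ c₂ * y ^ 2 := by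
      intro x y; simp [qc]; try ring
    constructor
    · intro h
      constructor
      · intro hc
        exact one_ne_zero (h 0 1 (by rw [hq]; simp [hc])).2
      · intro x hc
        exact one_ne_zero (h x 1 (by rw [hq]; simp [hc])).2
    · rintro ⟨hc, hn⟩ x y hxy
      rw [hq] at hxy
      have key : x ^ 2 = algebraMap k ℓ c₂ * y ^ 2 := by linear_combination hxy
      by_cases hy : y = 0
      · subst hy
        constructor
        · exact pow_eq_zero_iff (n := 2) (by norm_num) |>.mp (by simpa using key)
        · rfl
      · exfalso
        refine hn (x / y) ?_
        rw [div_pow, div_eq_iff (pow_ne_zero 2 hy)]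
        linear_combination key
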